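/- Let F be a finite field, let k_1, …, k_n be natural numbers with k_1 + ⋯ + k_n ≥ 1, and let A = (a_{i,j}) ∈ GL_n(F[x]) satisfy deg(a_{i,j}) ≤ k_j for all 1 ≤ i, j ≤ n. For each j, let v_j ∈ F^n be the vector whose i-th entry is the coefficient of x^{k_j} in a_{i,j}. Then the vectors v_1, v_2, …, v_n are linearly dependent over F. -/

import Mathlib

open Polynomial Matrix

lemma coeff_prod_natDegree_le {R : Type*} [CommSemiring R] {ι : Type*} (s : Finset ι)
    (f : ι → R[X]) (d : ι → ℕ) (h : ∀ i ∈ s, (f i).natDegree ≤ d i) :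
    (∏ i ∈ s, f i).coeff (∑ i ∈ s, d i) = ∏ i ∈ s, (f i).coeff (d i) := by
  induction s using Finset.cons_induction with
  | empty => simp
  | cons a s ha ih =>
    rw [Finset.prod_cons, Finset.sum_cons, Finset.prod_cons,
      coeff_mul_add_eq_of_natDegree_le (h a (Finset.mem_cons_self a s))
        ((natDegree_prod_le _ _).trans (Finset.sum_le_sum fun i hi => h i (Finset.mem_cons_of_mem hi))),
      ih (fun i hi => h i (Finset.mem_cons_of_mem hi))]

/-- If `k₁ + ⋯ + kₙ ≥ 1` and `A ∈ GL_n(F[x])` has `deg a_{i,j} ≤ k_j` for all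
`i, j`, then the vectors `v_j = (coeff of x^{k_j} in a_{i,j})_i ∈ Fⁿ` are linearly dependent
over `F`. -/
theorem stmt_5 (F : Type*) [Field F] [Fintype F]
    (n : ℕ) (k : Fin n → ℕ) (hk : 1 ≤ ∑ j, k j)
    (A : GL (Fin n) F[X])
    (hdeg : ∀ i j, ((A : Matrix (Fin n) (Fin n) F[X]) i j).degree ≤ (k j : ℕ)) :
    ¬ LinearIndependent F
        (fun j : Fin n => fun i : Fin n =>
          ((A : Matrix (Fin n) (Fin n) F[X]) i j).coeff (k j)) := by
  set M : Matrix (Fin n) (Fin n) F[X] := (A : Matrix (Fin n) (Fin n) F[X])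
  set V : Matrix (Fin n) (Fin n) F := fun i j => (M i j).coeff (k j) with hV
  have hdeg' : ∀ i j, (M i j).natDegree ≤ k j := fun i j =>
    natDegree_le_iff_degree_le.mpr (hdeg i j)
  -- det V = coeff (∑ k) (det M)
  have hdet : V.det = M.det.coeff (∑ j, k j) := by
    rw [det_apply', det_apply', finset_sum_coeff]
    refine Finset.sum_congr rfl fun σ _ => ?_
    rw [show ((Equiv.Perm.sign σ : ℤ) : F[X]) * ∏ i, M (σ i) i
        = C ((Equiv.Perm.sign σ : ℤ) : F) * ∏ i, M (σ i) i by rw [map_intCast],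
      coeff_C_mul, coeff_prod_natDegree_le _ _ _ (fun i _ => hdeg' (σ i) i)]
  -- det M is a unit, hence constant
  have hu : IsUnit M.det := A.isUnit.map (Matrix.detMonoidHom)
  have hnd : M.det.natDegree = 0 := natDegree_eq_zero_of_isUnit hu
  have hc : M.det.coeff (∑ j, k j) = 0 :=
    coeff_eq_zero_of_natDegree_lt (by omega)
  have hVdet : V.det = 0 := by rw [hdet, hc]
  have : ¬ IsUnit V := fun h => by
    simp [Matrix.isUnit_iff_isUnit_det, hVdet, isUnit_iff_ne_zero] at h
  intro hli
  exact this (Matrix.linearIndependent_cols_iff_isUnit.mp hli)
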